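/- Let H^e = \mathbb{C}\langle Y_\infty \rangle/(| - 1) be the free associative algebra on planar binary trees with the root tree identified with 1, with co-product \Delta^p_e defined on generators recursively by \Delta^p_e(r \vee s) = 1 \otimes (r\vee s) + \sum (r \vee s_{(1)}) \otimes s_{(2)} where \Delta^p_e(s) = \sum s_{(1)} \otimes s_{(2)}. Then for t_n = \sum_{|t|=n} t one has \Delta^p_e(t_n) = \sum_{k=0}^{n} t_k \otimes t_{n-k}. Hence the map b_n \mapsto t_n embeds the Hopf algebra H^{inv} = \mathbb{C}\langle b_1, b_2, \ldots\rangle with co-product \Delta^{inv} b_n = \sum_{k=0}^n b_k \otimes b_{n-k} as a Hopf sub-algebra of H^e. -/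
import Mathlib


noncomputable section

/-- Rooted planar binary trees; a non-trivial tree decomposes uniquely as
`node r s = r ∨ s`. -/
inductive PBT : Type
  | leaf : PBT
  | node : PBT → PBT → PBT
deriving DecidableEq

/-- The number of internal vertices of a planar binary tree. -/
def PBT.size : PBT → ℕ
  | .leaf => 0
  | .node l r => l.size + r.size + 1

/-- The finite set `Y_n` of planar binary trees with `n` internal vertices. -/
def treesOf : ℕ → Finset PBT
  | 0 => {PBT.leaf}
  | n + 1 =>
    (Finset.range (n + 1)).attach.biUnion fun i =>
      ((treesOf i.1) ×ˢ (treesOf (n - i.1))).image fun p => PBT.node p.1 p.2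
decreasing_by
  all_goals
    have := i.2
    simp only [Finset.mem_range] at this
    omega

/-- `H^e = ℂ⟨Y_∞⟩/(| - 1)`: the free associative algebra on the non-trivial planar
binary trees (the root tree `|` being identified with `1`). -/
abbrev He : Type := FreeAlgebra ℂ {t : PBT // t ≠ PBT.leaf}

/-- The generator of `H^e` corresponding to a tree, with `| = 1`. -/
def gen (t : PBT) : He :=
  if h : t = PBT.leaf then 1 else FreeAlgebra.ι ℂ ⟨t, h⟩

/-- The co-product `Δ^p_e` on a generator tree, encoded as a finitely supported function
(left tensor legs are trees): `Δ^p_e(|) = | ⊗ |` and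
`Δ^p_e(r ∨ s) = 1 ⊗ (r ∨ s) + ∑ (r ∨ s₍₁₎) ⊗ s₍₂₎` where `Δ^p_e(s) = ∑ s₍₁₎ ⊗ s₍₂₎`. -/
def De : PBT → (PBT →₀ He)
  | .leaf => Finsupp.single PBT.leaf 1
  | .node r s =>
    Finsupp.single PBT.leaf (gen (PBT.node r s)) +
      Finsupp.mapDomain (fun u : PBT => PBT.node r u) (De s)

open TensorProduct in
/-- Interpret a finitely supported function `PBT →₀ H^e` as the element
`∑_u gen u ⊗ f u` of `H^e ⊗ H^e`. -/
def toTensor (f : PBT →₀ He) : He ⊗[ℂ] He :=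
  f.sum fun u h => gen u ⊗ₜ[ℂ] h

open TensorProduct in
/-- The co-product `Δ^p_e : H^e → H^e ⊗ H^e`, extended as an algebra homomorphism. -/
def Δpe : He →ₐ[ℂ] He ⊗[ℂ] He :=
  FreeAlgebra.lift ℂ fun t : {t : PBT // t ≠ PBT.leaf} => toTensor (De t.1)

/-- `t_n = ∑_{|t| = n} t`, as an element of `H^e`. -/
def te (n : ℕ) : He := ∑ t ∈ treesOf n, gen t

/- ===== auxiliary development ===== -/


lemma treesOf_zero : treesOf 0 = {PBT.leaf} := by rw [treesOf]

lemma treesOf_succ (n : ℕ) : treesOf (n+1) =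
    (Finset.range (n + 1)).attach.biUnion (fun i =>
      ((treesOf i.1) ×ˢ (treesOf (n - i.1))).image fun p => PBT.node p.1 p.2) := by
  rw [treesOf]

lemma size_of_mem : ∀ n : ℕ, ∀ t ∈ treesOf n, t.size = n := by
  intro n
  induction n using Nat.strong_induction_on with
  | _ n ih =>
    cases n with
    | zero =>
      intro t ht
      rw [treesOf_zero, Finset.mem_singleton] at ht
      simp [ht, PBT.size]
    | succ n =>
      intro t ht
      rw [treesOf_succ] at ht
      simp only [Finset.mem_biUnion, Finset.mem_image, Finset.mem_product,
        Finset.mem_attach, true_and] at ht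
      obtain ⟨⟨i, hi⟩, ⟨r, s⟩, ⟨hr, hs⟩, rfl⟩ := ht
      simp only [Finset.mem_range] at hi
      have h1 := ih i (by omega) r hr
      have h2 := ih (n - i) (by omega) s hs
      simp only [PBT.size, h1, h2]
      omega

lemma mem_treesOf : ∀ t : PBT, t ∈ treesOf t.size := by
  intro t
  induction t with
  | leaf => rw [PBT.size, treesOf_zero]; exact Finset.mem_singleton_self _
  | node r s ihr ihs =>
    show PBT.node r s ∈ treesOf (r.size + s.size + 1)
    rw [treesOf_succ]
    refine Finset.mem_biUnion.2 ⟨⟨r.size, Finset.mem_range.2 (by omega)⟩,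
      Finset.mem_attach _ _, ?_⟩
    refine Finset.mem_image.2 ⟨(r, s), Finset.mem_product.2 ⟨ihr, ?_⟩, rfl⟩
    simpa [Nat.add_sub_cancel_left] using ihs

lemma sum_treesOf_succ {M : Type*} [AddCommMonoid M] (n : ℕ) (f : PBT → M) :
    ∑ v ∈ treesOf (n+1), f v =
      ∑ i ∈ Finset.range (n+1), ∑ r ∈ treesOf i, ∑ s ∈ treesOf (n - i), f (PBT.node r s) := by
  rw [treesOf_succ, Finset.sum_biUnion]
  · rw [← Finset.sum_attach (Finset.range (n+1))
      (fun i => ∑ r ∈ treesOf i, ∑ s ∈ treesOf (n - i), f (PBT.node r s))]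
    refine Finset.sum_congr rfl fun i _ => ?_
    rw [Finset.sum_image (by rintro ⟨a, b⟩ - ⟨c, d⟩ - h; simpa using h), Finset.sum_product]
  · rintro ⟨i, hi⟩ - ⟨j, hj⟩ - hij
    simp only [Function.onFun]
    refine Finset.disjoint_left.2 fun v hv hv' => ?_
    simp only [Finset.mem_image, Finset.mem_product] at hv hv'
    obtain ⟨⟨r, s⟩, ⟨hr, hs⟩, rfl⟩ := hv
    obtain ⟨⟨r', s'⟩, ⟨hr', hs'⟩, he⟩ := hv'
    obtain ⟨rfl, rfl⟩ : r = r' ∧ s = s' := by simpa [PBT.node.injEq] using he.symm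
    exact hij (Subtype.ext (show i = j from
      (size_of_mem i r hr).symm.trans (size_of_mem j r hr')))

open TensorProduct

lemma gen_leaf : gen PBT.leaf = 1 := by simp [gen]

lemma te_zero : te 0 = 1 := by
  rw [te, treesOf_zero, Finset.sum_singleton, gen_leaf]

lemma toTensor_add (f g : PBT →₀ He) : toTensor (f + g) = toTensor f + toTensor g :=
  Finsupp.sum_add_index' (fun u => TensorProduct.tmul_zero _ _)
    (fun u b₁ b₂ => TensorProduct.tmul_add _ _ _)

lemma toTensor_sum {ι : Type*} (s : Finset ι) (F : ι → (PBT →₀ He)) :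
    toTensor (∑ i ∈ s, F i) = ∑ i ∈ s, toTensor (F i) :=
  map_sum (AddMonoidHom.mk' toTensor toTensor_add) F s

lemma toTensor_single (u : PBT) (h : He) :
    toTensor (Finsupp.single u h) = gen u ⊗ₜ[ℂ] h :=
  Finsupp.sum_single_index (TensorProduct.tmul_zero _ _)

lemma Δpe_gen (t : PBT) : Δpe (gen t) = toTensor (De t) := by
  by_cases h : t = PBT.leaf
  · subst h
    rw [gen_leaf, map_one]
    show (1 : He ⊗[ℂ] He) = toTensor (Finsupp.single PBT.leaf 1)
    rw [toTensor_single, gen_leaf, Algebra.TensorProduct.one_def]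
  · rw [gen, dif_neg h, Δpe, FreeAlgebra.lift_ι_apply]

def T (k m : ℕ) : PBT →₀ He := ∑ u ∈ treesOf k, Finsupp.single u (te m)

lemma single_sum {ι : Type*} (a : PBT) (s : Finset ι) (f : ι → He) :
    Finsupp.single a (∑ t ∈ s, f t) = ∑ t ∈ s, Finsupp.single a (f t) :=
  map_sum (Finsupp.singleAddHom (M := He) a) f s

lemma mapDomain_sum' {ι : Type*} (g : PBT → PBT) (s : Finset ι) (F : ι → (PBT →₀ He)) :
    Finsupp.mapDomain g (∑ i ∈ s, F i) = ∑ i ∈ s, Finsupp.mapDomain g (F i) :=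
  map_sum (Finsupp.mapDomain.addMonoidHom g) F s

lemma sum_De : ∀ n : ℕ, ∑ t ∈ treesOf n, De t = ∑ k ∈ Finset.range (n+1), T k (n - k) := by
  intro n
  induction n using Nat.strong_induction_on with
  | _ n ih =>
    cases n with
    | zero =>
      rw [treesOf_zero, Finset.sum_singleton]
      show De PBT.leaf = ∑ k ∈ Finset.range 1, T k (0 - k)
      rw [Finset.sum_range_one]
      show Finsupp.single PBT.leaf 1 = T 0 0
      rw [T, treesOf_zero, Finset.sum_singleton, te_zero]
    | succ n =>
      rw [sum_treesOf_succ n De]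
      have hDe : ∀ (r s : PBT), De (PBT.node r s) =
          Finsupp.single PBT.leaf (gen (PBT.node r s)) +
            Finsupp.mapDomain (fun u : PBT => PBT.node r u) (De s) := fun r s => rfl
      simp only [hDe, Finset.sum_add_distrib]
      have part1 : ∑ i ∈ Finset.range (n+1), ∑ r ∈ treesOf i, ∑ s ∈ treesOf (n - i),
          Finsupp.single PBT.leaf (gen (PBT.node r s)) = Finsupp.single PBT.leaf (te (n+1)) := by
        rw [te, sum_treesOf_succ n gen]
        rw [single_sum]
        refine Finset.sum_congr rfl fun i _ => ?_
        rw [single_sum]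
        exact Finset.sum_congr rfl fun r _ => (single_sum _ _ _).symm
      rw [part1]
      have part2 : ∀ i ∈ Finset.range (n+1), ∀ r ∈ treesOf i,
          ∑ s ∈ treesOf (n - i), Finsupp.mapDomain (fun u : PBT => PBT.node r u) (De s) =
          ∑ j ∈ Finset.range (n - i + 1), ∑ u ∈ treesOf j,
            Finsupp.single (PBT.node r u) (te (n - i - j)) := by
        intro i hi r hr
        rw [← mapDomain_sum', ih (n - i) (by simp at hi; omega), mapDomain_sum']
        refine Finset.sum_congr rfl fun j _ => ?_
        rw [T, mapDomain_sum']
        exact Finset.sum_congr rfl fun u _ => Finsupp.mapDomain_single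
      rw [Finset.sum_congr rfl (fun i hi => Finset.sum_congr rfl (fun r hr => part2 i hi r hr))]
      -- now reindex
      have swap : ∀ i ∈ Finset.range (n+1),
          ∑ r ∈ treesOf i, ∑ j ∈ Finset.range (n - i + 1), ∑ u ∈ treesOf j,
            Finsupp.single (PBT.node r u) (te (n - i - j)) =
          ∑ j ∈ Finset.range (n + 1 - i), ∑ r ∈ treesOf i, ∑ u ∈ treesOf j,
            Finsupp.single (PBT.node r u) (te (n - i - j)) := by
        intro i hi
        have : n - i + 1 = n + 1 - i := by simp at hi; omega
        rw [this, Finset.sum_comm]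
      rw [Finset.sum_congr rfl swap]
      rw [← Finset.sum_range_diag_flip (n+1) (fun i j => ∑ r ∈ treesOf i, ∑ u ∈ treesOf j,
            Finsupp.single (PBT.node r u) (te (n - i - j)))]
      -- RHS
      rw [Finset.sum_range_succ' (fun k => T k (n + 1 - k)) (n+1)]
      have hT0 : T 0 (n + 1 - 0) = Finsupp.single PBT.leaf (te (n+1)) := by
        rw [T, treesOf_zero, Finset.sum_singleton, Nat.sub_zero]
      rw [hT0, add_comm]
      congr 1
      refine Finset.sum_congr rfl fun m hm => ?_
      rw [T, sum_treesOf_succ m (fun v => Finsupp.single v (te (n + 1 - (m + 1))))]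
      have : n + 1 - (m + 1) = n - m := by omega
      rw [this]
      refine Finset.sum_congr rfl fun k hk => ?_
      have hk' : k ≤ m := by simpa using Nat.lt_succ_iff.mp (Finset.mem_range.mp hk)
      have : n - k - (m - k) = n - m := by omega
      rw [this]

/- ============ injectivity machinery ============ -/

def comb : ℕ → PBT
  | 0 => PBT.leaf
  | n + 1 => PBT.node PBT.leaf (comb n)

lemma comb_size : ∀ n, (comb n).size = n
  | 0 => rfl
  | n + 1 => by simp [comb, PBT.size, comb_size n]

def bgen (n : ℕ) : FreeAlgebra ℂ {n : ℕ // 0 < n} :=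
  if h : 0 < n then FreeAlgebra.ι ℂ ⟨n, h⟩ else 1

def ψ : He →ₐ[ℂ] FreeAlgebra ℂ {n : ℕ // 0 < n} :=
  FreeAlgebra.lift ℂ fun t : {t : PBT // t ≠ PBT.leaf} =>
    if t.1 = comb t.1.size then bgen t.1.size else 0

lemma ψ_te {n : ℕ} (hn : 0 < n) :
    ψ (te n) = FreeAlgebra.ι ℂ (⟨n, hn⟩ : {n : ℕ // 0 < n}) := by
  rw [te, map_sum]
  have key : ∀ t ∈ treesOf n, ψ (gen t) =
      if t = comb n then FreeAlgebra.ι ℂ (⟨n, hn⟩ : {n : ℕ // 0 < n}) else 0 := by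
    intro t ht
    have hs : t.size = n := size_of_mem n t ht
    have hne : t ≠ PBT.leaf := by
      intro h; subst h
      rw [PBT.size] at hs; omega
    rw [gen, dif_neg hne, ψ, FreeAlgebra.lift_ι_apply]
    simp only [hs]
    rw [bgen, dif_pos hn]
  rw [Finset.sum_congr rfl key, Finset.sum_ite_eq', if_pos]
  have := mem_treesOf (comb n)
  rwa [comb_size] at this

lemma psi_lift (x : FreeAlgebra ℂ {n : ℕ // 0 < n}) :
    ψ ((FreeAlgebra.lift ℂ (fun i : {n : ℕ // 0 < n} => te i.1) :
        FreeAlgebra ℂ {n : ℕ // 0 < n} →ₐ[ℂ] He) x) = x := by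
  have h : ψ.comp (FreeAlgebra.lift ℂ (fun i : {n : ℕ // 0 < n} => te i.1)) =
      AlgHom.id ℂ (FreeAlgebra ℂ {n : ℕ // 0 < n}) := by
    apply FreeAlgebra.hom_ext
    funext i
    simp only [Function.comp_apply, AlgHom.coe_comp, AlgHom.coe_id, id_eq,
      FreeAlgebra.lift_ι_apply]
    exact ψ_te i.2
  calc ψ ((FreeAlgebra.lift ℂ (fun i : {n : ℕ // 0 < n} => te i.1)) x)
      = (ψ.comp (FreeAlgebra.lift ℂ (fun i : {n : ℕ // 0 < n} => te i.1))) x := rfl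
    _ = x := by rw [h]; rfl


open TensorProduct in
/-- `Δ^p_e(t_n) = ∑_{k=0}^n t_k ⊗ t_{n-k}`; hence the algebra map `H^inv → H^e`,
`b_n ↦ t_n`, is an injective morphism compatible with the co-products, embedding
`H^inv` as a Hopf sub-algebra of `H^e`. -/
theorem Δpe_tn :
    (∀ n : ℕ, Δpe (te n) = ∑ k ∈ Finset.range (n + 1), te k ⊗ₜ[ℂ] te (n - k)) ∧
    Function.Injective
      (FreeAlgebra.lift ℂ (fun i : {n : ℕ // 0 < n} => te i.1) :
        FreeAlgebra ℂ {n : ℕ // 0 < n} →ₐ[ℂ] He) := by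
  constructor
  · intro n
    rw [te, map_sum]
    calc ∑ t ∈ treesOf n, Δpe (gen t)
        = ∑ t ∈ treesOf n, toTensor (De t) := Finset.sum_congr rfl fun t _ => Δpe_gen t
      _ = toTensor (∑ t ∈ treesOf n, De t) := (toTensor_sum _ _).symm
      _ = toTensor (∑ k ∈ Finset.range (n+1), T k (n - k)) := by rw [sum_De n]
      _ = ∑ k ∈ Finset.range (n+1), toTensor (T k (n - k)) := toTensor_sum _ _
      _ = ∑ k ∈ Finset.range (n+1), te k ⊗ₜ[ℂ] te (n - k) := by
          refine Finset.sum_congr rfl fun k _ => ?_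
          rw [T, toTensor_sum]
          simp only [toTensor_single]
          rw [← TensorProduct.sum_tmul]
          rfl
  · exact Function.LeftInverse.injective psi_lift

end
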